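/- arXiv:math/0208162 — 3 statements merged into one kernel-verified Lean document; each statement's English description precedes it below -/
import Mathlib

section
/- Let H ⊆ G be a finite subgroup such that |H| is invertible in R, and let u: R[G/H] → R[G/H] be an RG-map sending the coset 1H to Σ_{gH ∈ G/H} r_{gH}·gH. Then R[G/H] is a finitely generated projective RG-module and tr_{RG}(u) = |H|⁻¹·r_{1H}; in particular tr_{RG}(id_{R[G/H]}) = |H|⁻¹. -/
/-- A finite projective coordinate system for a module over a group ring
`MonoidAlgebra R Γ`; it exists iff the module is finitely generated
projective.  The Hattori–Stallings trace is computed with respect to such a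
system (and is independent of the choice). -/
structure ProjCoord (R : Type*) [CommRing R] (Γ : Type*) [Group Γ]
    (ι : Type*) [Fintype ι]
    (P : Type*) [AddCommMonoid P] [Module (MonoidAlgebra R Γ) P] where
  x : ι → P
  f : ι → (P →ₗ[MonoidAlgebra R Γ] MonoidAlgebra R Γ)
  dual : ∀ p : P, ∑ i, (f i p) • x i = p

/-- The Hattori–Stallings trace (coefficient at the identity of the sum of
diagonal entries). -/
noncomputable def ProjCoord.tr {R : Type*} [CommRing R] {Γ : Type*} [Group Γ]
    {ι : Type*} [Fintype ι] {P : Type*} [AddCommMonoid P]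
    [Module (MonoidAlgebra R Γ) P]
    (c : ProjCoord R Γ ι P) (u : P →ₗ[MonoidAlgebra R Γ] P) : R :=
  ∑ i, (c.f i (u (c.x i))).coeff 1

/-- The permutation module `R[G/H]`, i.e. the free `R`-module on the `G`-set
`G/H`, viewed as a module over the group ring `MonoidAlgebra R G`. -/
noncomputable abbrev permModule (R : Type*) [CommRing R] (G : Type*) [Group G]
    (H : Subgroup G) : Type _ :=
  (Representation.ofMulAction R G (G ⧸ H)).asModule

section Aux

variable {R : Type*} [CommRing R] {Γ : Type*} [Group Γ]

lemma MAadd_apply (x y : MonoidAlgebra R Γ) (g : Γ) : (x + y).coeff g = x.coeff g + y.coeff g :=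
  Finsupp.add_apply x.coeff y.coeff g

lemma MAsmul_apply (r : R) (x : MonoidAlgebra R Γ) (g : Γ) : (r • x).coeff g = r * x.coeff g :=
  Finsupp.smul_apply r x.coeff g

lemma MAsum_apply {ι : Type*} (s : Finset ι) (f : ι → MonoidAlgebra R Γ) (g : Γ) :
    (∑ i ∈ s, f i).coeff g = ∑ i ∈ s, (f i).coeff g := by
  rw [MonoidAlgebra.coeff_sum, Finsupp.finset_sum_apply]

lemma coeff_one_mul_comm (a b : MonoidAlgebra R Γ) : (a * b).coeff 1 = (b * a).coeff 1 := by
  classical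
  induction a using MonoidAlgebra.induction_linear with
  | zero => simp
  | add a a' ha ha' => simp [add_mul, mul_add, MAadd_apply, ha, ha']
  | single g r =>
    induction b using MonoidAlgebra.induction_linear with
    | zero => simp
    | add b b' hb hb' => simp [add_mul, mul_add, MAadd_apply, hb, hb']
    | single h s =>
      simp only [MonoidAlgebra.single_mul_single, MonoidAlgebra.coeff_single, Finsupp.single_apply]
      by_cases hgh : g * h = 1
      · have hhg : h * g = 1 := by
          rw [(mul_eq_one_iff_inv_eq.mp hgh).symm]; simp
        rw [if_pos hgh, if_pos hhg, mul_comm]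
      · have hhg : ¬ h * g = 1 := fun hc => hgh (by
          rw [(mul_eq_one_iff_inv_eq.mp hc).symm]; simp)
        rw [if_neg hgh, if_neg hhg]

lemma ProjCoord.tr_indep {ι κ : Type*} [Fintype ι] [Fintype κ]
    {P : Type*} [AddCommMonoid P] [Module (MonoidAlgebra R Γ) P]
    (c : ProjCoord R Γ ι P) (d : ProjCoord R Γ κ P)
    (u : P →ₗ[MonoidAlgebra R Γ] P) : c.tr u = d.tr u := by
  unfold ProjCoord.tr
  have h1 : ∀ i, (c.f i (u (c.x i))).coeff 1
      = ∑ j, (d.f j (u (c.x i)) * c.f i (d.x j)).coeff 1 := by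
    intro i
    conv_lhs => rw [← d.dual (u (c.x i))]
    rw [map_sum, MAsum_apply]
    refine Finset.sum_congr rfl fun j _ => ?_
    rw [LinearMap.map_smul, smul_eq_mul]
  have h2 : ∀ j, (d.f j (u (d.x j))).coeff 1
      = ∑ i, (c.f i (d.x j) * d.f j (u (c.x i))).coeff 1 := by
    intro j
    conv_lhs => rw [← c.dual (d.x j)]
    rw [map_sum, map_sum, MAsum_apply]
    refine Finset.sum_congr rfl fun i _ => ?_
    rw [LinearMap.map_smul, LinearMap.map_smul, smul_eq_mul]
  simp only [h1, h2]
  rw [Finset.sum_comm]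
  exact Finset.sum_congr rfl fun j _ => Finset.sum_congr rfl fun i _ =>
    coeff_one_mul_comm _ _

end Aux

section Perm

variable (R : Type*) [CommRing R] (G : Type*) [Group G] (H : Subgroup G)
  [Fintype (↥H)]

/-- `ψ(gH) = Σ_{h∈H} gh` as an element of the group algebra. -/
noncomputable def permPsi (q : G ⧸ H) : MonoidAlgebra R G :=
  ∑ h : H, MonoidAlgebra.single (q.out * (h : G)) (1 : R)

lemma permPsi_mk (g : G) :
    permPsi R G H (g : G ⧸ H) = ∑ h : H, MonoidAlgebra.single (g * (h : G)) (1 : R) := by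
  classical
  have ht : g⁻¹ * ((g : G ⧸ H).out) ∈ H := by
    rw [← QuotientGroup.eq]
    exact (QuotientGroup.out_eq' (g : G ⧸ H)).symm
  set t : ↥H := ⟨g⁻¹ * ((g : G ⧸ H).out), ht⟩ with htdef
  unfold permPsi
  refine Fintype.sum_equiv (Equiv.mulLeft t)
    (fun h => MonoidAlgebra.single (((g : G ⧸ H).out) * (h : G)) (1 : R))
    (fun h => MonoidAlgebra.single (g * (h : G)) (1 : R)) fun h => ?_
  simp only [Equiv.coe_mulLeft, htdef, Submonoid.mk_mul_mk, Subgroup.coe_mul,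
    MulMemClass.mk_mul_mk]
  congr 1
  group

open Classical in
lemma permPsi_apply_one (q : G ⧸ H) :
    (permPsi R G H q).coeff 1 = if q = ((1 : G) : G ⧸ H) then (1 : R) else 0 := by
  classical
  unfold permPsi
  rw [MAsum_apply]
  simp only [MonoidAlgebra.coeff_single, Finsupp.single_apply]
  by_cases hq : q = ((1 : G) : G ⧸ H)
  · have hout : (q.out)⁻¹ ∈ H := by
      have h1 : (q.out : G ⧸ H) = ((1 : G) : G ⧸ H) := by
        rw [QuotientGroup.out_eq', hq]
      have := QuotientGroup.eq.mp h1
      simpa using this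
    rw [if_pos hq,
      Finset.sum_eq_single_of_mem (⟨(q.out)⁻¹, hout⟩ : ↥H) (Finset.mem_univ _)]
    · rw [if_pos (by simp)]
    · intro b _ hb
      rw [if_neg]
      intro hcon
      exact hb (Subtype.ext (inv_eq_of_mul_eq_one_right hcon).symm)
  · rw [if_neg hq]
    apply Finset.sum_eq_zero
    intro h _
    rw [if_neg]
    intro hcon
    apply hq
    have hmem : (q.out)⁻¹ ∈ H := (inv_eq_of_mul_eq_one_right hcon) ▸ h.2
    calc q = (q.out : G ⧸ H) := (QuotientGroup.out_eq' q).symm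
    _ = ((1 : G) : G ⧸ H) := by rw [QuotientGroup.eq]; simpa using hmem

/-- The `R`-linear extension of `ψ`. -/
noncomputable def permPhi : MonoidAlgebra R (G ⧸ H) →ₗ[R] MonoidAlgebra R G :=
  Finsupp.lift (MonoidAlgebra R G) R (G ⧸ H) (permPsi R G H) ∘ₗ
    (MonoidAlgebra.coeffLinearEquiv R).toLinearMap

lemma permPhi_single (q : G ⧸ H) (r : R) :
    permPhi R G H (MonoidAlgebra.single q r) = r • permPsi R G H q := by
  simp [permPhi]

lemma permPsi_smul (g : G) (q : G ⧸ H) :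
    permPsi R G H (g • q) = MonoidAlgebra.single g 1 * permPsi R G H q := by
  classical
  conv_lhs => rw [← QuotientGroup.out_eq' q]
  rw [show g • ((q.out : G) : G ⧸ H) = ((g * q.out : G) : G ⧸ H) from
    MulAction.Quotient.smul_mk H g q.out]
  rw [permPsi_mk]
  conv_rhs => rw [← QuotientGroup.out_eq' q, permPsi_mk]
  rw [Finset.mul_sum]
  refine Finset.sum_congr rfl fun h _ => ?_
  rw [MonoidAlgebra.single_mul_single, one_mul, mul_assoc]

lemma permPhi_rho (g : G) (v : MonoidAlgebra R (G ⧸ H)) :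
    permPhi R G H (Representation.ofMulAction R G (G ⧸ H) g v)
      = MonoidAlgebra.single g 1 * permPhi R G H v := by
  induction v using MonoidAlgebra.induction_linear with
  | zero => simp
  | add a b ha hb => simp [map_add, mul_add, ha, hb]
  | single q r =>
    rw [Representation.ofMulAction_single, permPhi_single, permPhi_single,
      permPsi_smul, mul_smul_comm]

lemma permPhi_asAlgebraHom (a : MonoidAlgebra R G) (v : MonoidAlgebra R (G ⧸ H)) :
    permPhi R G H ((Representation.ofMulAction R G (G ⧸ H)).asAlgebraHom a v)
      = a * permPhi R G H v := by
  induction a using MonoidAlgebra.induction_linear with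
  | zero => simp
  | add a b ha hb => simp [map_add, add_mul, ha, hb]
  | single g r =>
    rw [Representation.asAlgebraHom_single]
    simp only [LinearMap.smul_apply, map_smul]
    rw [permPhi_rho, ← smul_mul_assoc, MonoidAlgebra.smul_single', mul_one]

lemma permPhi_apply_one (v : MonoidAlgebra R (G ⧸ H)) :
    (permPhi R G H v).coeff 1 = v.coeff ((1 : G) : G ⧸ H) := by
  classical
  induction v using MonoidAlgebra.induction_linear with
  | zero => simp
  | add a b ha hb => simp [map_add, MAadd_apply, Finsupp.add_apply, ha, hb]
  | single q r =>
    rw [permPhi_single, MAsmul_apply, permPsi_apply_one, MonoidAlgebra.coeff_single,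
      Finsupp.single_apply]
    by_cases hq : q = ((1 : G) : G ⧸ H) <;> simp [hq, eq_comm]

lemma permPhi_asAlgebraHom_one (v : MonoidAlgebra R (G ⧸ H)) :
    (Representation.ofMulAction R G (G ⧸ H)).asAlgebraHom (permPhi R G H v)
        (MonoidAlgebra.single ((1 : G) : G ⧸ H) (1 : R))
      = (Fintype.card ↥H) • v := by
  classical
  induction v using MonoidAlgebra.induction_linear with
  | zero => simp
  | add a b ha hb => simp [map_add, ha, hb, smul_add]
  | single q r =>
    rw [permPhi_single, map_smul]
    simp only [LinearMap.smul_apply]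
    have : (Representation.ofMulAction R G (G ⧸ H)).asAlgebraHom (permPsi R G H q)
        (MonoidAlgebra.single ((1 : G) : G ⧸ H) (1 : R))
        = (Fintype.card ↥H) • MonoidAlgebra.single q (1 : R) := by
      unfold permPsi
      rw [map_sum]
      simp only [LinearMap.coe_sum, Finset.sum_apply]
      have : ∀ h : ↥H,
          (Representation.ofMulAction R G (G ⧸ H)).asAlgebraHom
            (MonoidAlgebra.single (q.out * (h : G)) (1 : R))
            (MonoidAlgebra.single ((1 : G) : G ⧸ H) (1 : R))
          = MonoidAlgebra.single q (1 : R) := by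
        intro h
        rw [Representation.asAlgebraHom_single, one_smul,
          Representation.ofMulAction_single]
        congr 1
        rw [show (q.out * (h : G)) • (((1 : G) : G ⧸ H)) = (((q.out * (h : G)) * 1 : G) : G ⧸ H)
          from MulAction.Quotient.smul_mk H _ 1, mul_one,
          QuotientGroup.mk_mul_of_mem _ h.2, QuotientGroup.out_eq']
      rw [Finset.sum_congr rfl fun h _ => this h, Finset.sum_const, Finset.card_univ]
    rw [this, smul_comm]
    congr 1
    rw [MonoidAlgebra.smul_single', mul_one]

/-- The projective coordinate functional `f₀`. -/
noncomputable def permF0 : permModule R G H →ₗ[MonoidAlgebra R G] MonoidAlgebra R G where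
  toFun p := Ring.inverse ((Nat.card (↥H) : R)) •
    permPhi R G H ((Representation.ofMulAction R G (G ⧸ H)).asModuleEquiv p)
  map_add' p q := by simp only [map_add, smul_add]
  map_smul' a p := by
    simp only [RingHom.id_apply, smul_eq_mul]
    rw [Representation.asModuleEquiv_map_smul, permPhi_asAlgebraHom, mul_smul_comm]

/-- The generator `x₀ = 1H`. -/
noncomputable def permX0 : permModule R G H :=
  (Representation.ofMulAction R G (G ⧸ H)).asModuleEquiv.symm
    (MonoidAlgebra.single ((1 : G) : G ⧸ H) (1 : R))

lemma permF0_dual (hH : IsUnit ((Nat.card (↥H) : R))) (p : permModule R G H) :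
    permF0 R G H p • permX0 R G H = p := by
  apply (Representation.ofMulAction R G (G ⧸ H)).asModuleEquiv.injective
  rw [Representation.asModuleEquiv_map_smul]
  unfold permX0
  rw [LinearEquiv.apply_symm_apply]
  show (Representation.ofMulAction R G (G ⧸ H)).asAlgebraHom
    (Ring.inverse ((Nat.card (↥H) : R)) • permPhi R G H _) _ = _
  rw [map_smul]
  simp only [LinearMap.smul_apply]
  rw [permPhi_asAlgebraHom_one, ← Nat.cast_smul_eq_nsmul R, smul_smul,
    ← Nat.card_eq_fintype_card, Ring.inverse_mul_cancel _ hH, one_smul]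

/-- The coordinate system with one generator. -/
noncomputable def permCoord (hH : IsUnit ((Nat.card (↥H) : R))) :
    ProjCoord R G (Fin 1) (permModule R G H) where
  x := fun _ => permX0 R G H
  f := fun _ => permF0 R G H
  dual := fun p => by rw [Fin.sum_univ_one, permF0_dual R G H hH]

lemma permCoord_tr (hH : IsUnit ((Nat.card (↥H) : R)))
    (u : permModule R G H →ₗ[MonoidAlgebra R G] permModule R G H) :
    (permCoord R G H hH).tr u = Ring.inverse ((Nat.card (↥H) : R)) *
      (((Representation.ofMulAction R G (G ⧸ H)).asModuleEquiv
          (u ((Representation.ofMulAction R G (G ⧸ H)).asModuleEquiv.symm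
            (MonoidAlgebra.ofCoeff (Finsupp.single ((1 : G) : G ⧸ H) (1 : R)))))).coeff
        ((1 : G) : G ⧸ H)) := by
  unfold ProjCoord.tr
  rw [Fin.sum_univ_one]
  show (Ring.inverse ((Nat.card (↥H) : R)) • permPhi R G H _).coeff 1 = _
  rw [MAsmul_apply, permPhi_apply_one]
  rfl

end Perm

/-- let `H ⊆ G` be a finite subgroup with `|H|` invertible in
`R`, and let `u : R[G/H] → R[G/H]` be an `RG`-map sending `1H` to
`∑_{gH} r_{gH}·gH`.  Then `R[G/H]` is a finitely generated projective
`RG`-module, and (for every finite projective coordinate system)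
`tr_{RG}(u) = |H|⁻¹ · r_{1H}`; in particular
`tr_{RG}(id) = |H|⁻¹` (note `r_{1H} = 1` for `u = id`). -/
theorem hattoriStallings_trace_permModule
    (R : Type*) [CommRing R] (G : Type*) [Group G]
    (H : Subgroup G) [Finite (↥H)]
    (hH : IsUnit ((Nat.card (↥H) : R)))
    (u : permModule R G H →ₗ[MonoidAlgebra R G] permModule R G H) :
    (∃ n : ℕ, Nonempty (ProjCoord R G (Fin n) (permModule R G H))) ∧
      (∀ {ι : Type} [Fintype ι] (c : ProjCoord R G ι (permModule R G H)),
        c.tr u = Ring.inverse ((Nat.card (↥H) : R)) *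
          (((Representation.ofMulAction R G (G ⧸ H)).asModuleEquiv
              (u ((Representation.ofMulAction R G (G ⧸ H)).asModuleEquiv.symm
                (MonoidAlgebra.ofCoeff (Finsupp.single ((1 : G) : G ⧸ H) (1 : R)))))).coeff
            ((1 : G) : G ⧸ H))) ∧
      (∀ {ι : Type} [Fintype ι] (c : ProjCoord R G ι (permModule R G H)),
        c.tr (LinearMap.id) = Ring.inverse ((Nat.card (↥H) : R))) := by
  cases nonempty_fintype (↥H)
  have key : ∀ (v : permModule R G H →ₗ[MonoidAlgebra R G] permModule R G H)
      {ι : Type} [Fintype ι] (c : ProjCoord R G ι (permModule R G H)),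
      c.tr v = Ring.inverse ((Nat.card (↥H) : R)) *
        (((Representation.ofMulAction R G (G ⧸ H)).asModuleEquiv
            (v ((Representation.ofMulAction R G (G ⧸ H)).asModuleEquiv.symm
              (MonoidAlgebra.ofCoeff (Finsupp.single ((1 : G) : G ⧸ H) (1 : R)))))).coeff
          ((1 : G) : G ⧸ H)) := by
    intro v ι _ c
    rw [ProjCoord.tr_indep c (permCoord R G H hH) v, permCoord_tr R G H hH v]
  refine ⟨⟨1, ⟨permCoord R G H hH⟩⟩, fun {ι} _ c => key u c, fun {ι} _ c => ?_⟩
  rw [key LinearMap.id c]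
  simp
end

section
/- For a finite group G acting on a finite proper relative G-CW-pair (X,A) and a cellular G-self-map (f,f₀), the orbifold Lefschetz number over ℚG equals |G|⁻¹ times the ordinary Lefschetz number: L^{ℚG}(f,f₀) = (1/|G|)·L^{ℤ[{1}]}(f,f₀). -/
/-- The cellular chain module `ℚ[I]` on a `G`-set `I` of cells, as a module
over the group ring `MonoidAlgebra ℚ G`. -/
noncomputable abbrev cellModule (G : Type*) [Group G] (I : Type*)
    [MulAction G I] : Type _ :=
  (Representation.ofMulAction ℚ G I).asModule

/-- The underlying `ℚ`-linear endomorphism of `ℚ[I]` (forgetting the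
`G`-action) of an `RG`-endomorphism of the cell module. -/
noncomputable def cellModule.forget (G : Type*) [Group G] (I : Type*)
    [MulAction G I]
    (u : cellModule G I →ₗ[MonoidAlgebra ℚ G] cellModule G I) :
    (I →₀ ℚ) →ₗ[ℚ] (I →₀ ℚ) :=
  (MonoidAlgebra.coeffLinearEquiv ℚ).toLinearMap ∘ₗ
  (((Representation.ofMulAction ℚ G I).asModuleEquiv.toAddMonoidHom.comp
    (u.toAddMonoidHom.comp
      (Representation.ofMulAction ℚ G I).asModuleEquiv.symm.toAddMonoidHom))).toRatLinearMap ∘ₗ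
  (MonoidAlgebra.coeffLinearEquiv ℚ).symm.toLinearMap

open Finsupp in
lemma key_trace (G : Type*) [Group G] [Fintype G] (I : Type*) [MulAction G I] [Fintype I]
    (u : cellModule G I →ₗ[MonoidAlgebra ℚ G] cellModule G I)
    {ι : Type} [Fintype ι] (c : ProjCoord ℚ G ι (cellModule G I)) :
    LinearMap.trace ℚ (I →₀ ℚ) (cellModule.forget G I u) = (Fintype.card G : ℚ) * c.tr u := by
  classical
  set P : I → cellModule G I :=
    fun j => (Representation.ofMulAction ℚ G I).asModuleEquiv.symm (MonoidAlgebra.single j 1) with hPdef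
  set w : ι → MonoidAlgebra ℚ I :=
    fun i => (Representation.ofMulAction ℚ G I).asModuleEquiv (u (c.x i)) with hwdef
  have hAlg : ∀ (a : MonoidAlgebra ℚ G) (v : MonoidAlgebra ℚ I),
      (Representation.ofMulAction ℚ G I).asAlgebraHom a v
        = ∑ g : G, a.coeff g • (Representation.ofMulAction ℚ G I) g v := by
    intro a v
    rw [Representation.asAlgebraHom_def, MonoidAlgebra.lift_apply,
      Finsupp.sum_fintype _ _ (fun g => zero_smul ℚ ((Representation.ofMulAction ℚ G I) g)), LinearMap.coe_sum, Finset.sum_apply]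
    rfl
  have htr : LinearMap.trace ℚ (I →₀ ℚ) (cellModule.forget G I u)
      = ∑ j : I, ((Representation.ofMulAction ℚ G I).asModuleEquiv (u (P j))).coeff j := by
    rw [LinearMap.trace_eq_matrix_trace ℚ Finsupp.basisSingleOne, Matrix.trace]
    refine Finset.sum_congr rfl fun j _ => ?_
    simp only [Matrix.diag_apply, LinearMap.toMatrix_apply, Finsupp.basisSingleOne_repr,
      LinearEquiv.refl_apply, Finsupp.coe_basisSingleOne]
    rfl
  have hPg : ∀ (g : G) (j : I), P (g • j) = MonoidAlgebra.of ℚ G g • P j := by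
    intro g j
    rw [hPdef]
    simp only
    rw [← Representation.ofMulAction_single (k := ℚ) g j 1,
      Representation.asModuleEquiv_symm_map_rho]
  have hfg : ∀ (i : ι) (g : G) (j : I), (c.f i (P (g • j))).coeff g = (c.f i (P j)).coeff 1 := by
    intro i g j
    rw [hPg, map_smul, smul_eq_mul, MonoidAlgebra.of_apply,
      MonoidAlgebra.coeff_single_mul_apply, inv_mul_cancel, one_mul]
  have hB : ∀ i : ι, (c.f i (u (c.x i))).coeff 1 = ∑ j : I, (w i).coeff j * (c.f i (P j)).coeff 1 := by
    intro i
    have hx : u (c.x i) = ∑ j : I, (algebraMap ℚ (MonoidAlgebra ℚ G) ((w i).coeff j)) • P j := by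
      apply (Representation.ofMulAction ℚ G I).asModuleEquiv.injective
      rw [map_sum]
      have : ∀ j : I, (Representation.ofMulAction ℚ G I).asModuleEquiv
          ((algebraMap ℚ (MonoidAlgebra ℚ G) ((w i).coeff j)) • P j) = MonoidAlgebra.single j ((w i).coeff j) := by
        intro j
        rw [hPdef]
        simp only
        rw [← Representation.asModuleEquiv_symm_map_smul,
          LinearEquiv.apply_symm_apply, MonoidAlgebra.smul_single, smul_eq_mul, mul_one]
      rw [Finset.sum_congr rfl fun j _ => this j]
      apply MonoidAlgebra.coeff_injective
      rw [MonoidAlgebra.coeff_sum]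
      exact ((Finsupp.sum_fintype (w i).coeff (fun j r => Finsupp.single j r)
        (fun j => Finsupp.single_zero j)).symm.trans (Finsupp.sum_single (w i).coeff)).symm
    rw [hx, map_sum, MonoidAlgebra.coeff_sum, Finsupp.finset_sum_apply]
    refine Finset.sum_congr rfl fun j _ => ?_
    rw [map_smul, smul_eq_mul]
    rw [show algebraMap ℚ (MonoidAlgebra ℚ G) ((w i).coeff j) = MonoidAlgebra.single 1 ((w i).coeff j) from rfl,
      MonoidAlgebra.coeff_single_mul_apply]
    simp
  have hstep : ∀ j : I, (Representation.ofMulAction ℚ G I).asModuleEquiv (u (P j))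
      = ∑ i, (Representation.ofMulAction ℚ G I).asAlgebraHom (c.f i (P j)) (w i) := by
    intro j
    conv_lhs => rw [← c.dual (P j), map_sum, map_sum]
    refine Finset.sum_congr rfl fun i _ => ?_
    rw [map_smul, Representation.asModuleEquiv_map_smul]
  rw [htr]
  calc (∑ j : I, ((Representation.ofMulAction ℚ G I).asModuleEquiv (u (P j))).coeff j)
      = ∑ j : I, ∑ i : ι, ∑ g : G, (c.f i (P j)).coeff g * (w i).coeff (g⁻¹ • j) := by
        refine Finset.sum_congr rfl fun j _ => ?_
        rw [hstep, MonoidAlgebra.coeff_sum, Finsupp.finset_sum_apply]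
        refine Finset.sum_congr rfl fun i _ => ?_
        rw [hAlg, MonoidAlgebra.coeff_sum, Finsupp.finset_sum_apply]
        refine Finset.sum_congr rfl fun g _ => ?_
        rw [MonoidAlgebra.coeff_smul_apply, smul_eq_mul, Representation.coeff_ofMulAction]
    _ = ∑ i : ι, ∑ g : G, ∑ j : I, (c.f i (P j)).coeff 1 * (w i).coeff j := by
        rw [Finset.sum_comm]
        refine Finset.sum_congr rfl fun i _ => ?_
        rw [Finset.sum_comm]
        refine Finset.sum_congr rfl fun g _ => ?_
        rw [← Equiv.sum_comp (MulAction.toPerm g)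
          (fun j => (c.f i (P j)).coeff g * (w i).coeff (g⁻¹ • j))]
        refine Finset.sum_congr rfl fun j _ => ?_
        simp only [MulAction.toPerm_apply, inv_smul_smul]
        rw [hfg]
    _ = (Fintype.card G : ℚ) * c.tr u := by
        simp only [Finset.sum_const, Finset.card_univ, nsmul_eq_mul]
        rw [ProjCoord.tr, Finset.mul_sum]
        refine Finset.sum_congr rfl fun i _ => ?_
        rw [hB i]
        congr 1
        exact Finset.sum_congr rfl fun j _ => mul_comm _ _

/-- for a finite group `G`, a finite proper relative
`G`-CW-pair `(X,A)` (with cell `G`-sets `I p`, all empty above the dimension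
`d`) and a cellular `G`-self-map `(f,f₀)` inducing the chain endomorphisms
`u p`, the orbifold Lefschetz number over `ℚG` equals `|G|⁻¹` times the
ordinary Lefschetz number:
`L^{ℚG}(f,f₀) = (1/|G|) · L^{ℤ[{1}]}(f,f₀)`. -/
theorem orbifold_lefschetz_of_finite_group
    (G : Type*) [Group G] [Fintype G]
    (I : ℕ → Type*) [∀ p, MulAction G (I p)] [∀ p, Fintype (I p)]
    (d : ℕ) (hd : ∀ p, d ≤ p → IsEmpty (I p))
    (u : ∀ p, cellModule G (I p) →ₗ[MonoidAlgebra ℚ G] cellModule G (I p))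
    {ι : ℕ → Type} [∀ p, Fintype (ι p)]
    (c : ∀ p, ProjCoord ℚ G (ι p) (cellModule G (I p))) :
    (∑ p ∈ Finset.range d, (-1 : ℚ) ^ p * (c p).tr (u p)) =
      (Fintype.card G : ℚ)⁻¹ *
        ∑ p ∈ Finset.range d, (-1 : ℚ) ^ p *
          LinearMap.trace ℚ (I p →₀ ℚ) (cellModule.forget G (I p) (u p)) := by
  rw [Finset.mul_sum]
  refine Finset.sum_congr rfl fun p _ => ?_
  rw [key_trace G (I p) (u p) (c p)]
  have h0 : (Fintype.card G : ℚ) ≠ 0 := Nat.cast_ne_zero.mpr Fintype.card_ne_zero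
  field_simp
end

section
/- For a cellular G-self-map (f,f₀) of a finite proper relative G-CW-complex (X,A), the orbifold Lefschetz number can be computed from incidence numbers: L^{ℚG}(f,f₀) = Σ_{p≥0} (−1)^p · Σ_{Ge ∈ G\I_p(X,A)} |G_e|⁻¹ · inc(f,e). -/
/-- The incidence number `inc(f,e)` of a cellular self-map at an open cell
`e`: the diagonal coefficient at `e` of the induced chain endomorphism in the
basis of open cells. -/
noncomputable def incidence (G : Type*) [Group G] (I : Type*) [MulAction G I]
    (u : cellModule G I →ₗ[MonoidAlgebra ℚ G] cellModule G I) (e : I) : ℚ :=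
  (cellModule.forget G I u (Finsupp.single e 1)) e

namespace OrbLef

open MulAction
open scoped Classical

variable {R : Type*} [CommRing R] {G : Type*} [Group G]

/-- Coefficient at `1` is a trace on the group algebra. -/
lemma coeff_one_mul_comm (a b : MonoidAlgebra R G) : (a * b).coeff 1 = (b * a).coeff 1 := by
  induction b using MonoidAlgebra.induction_linear with
  | zero => simp
  | add b₁ b₂ h₁ h₂ =>
    rw [mul_add, add_mul, MonoidAlgebra.coeff_add, MonoidAlgebra.coeff_add, Finsupp.add_apply,
      Finsupp.add_apply, h₁, h₂]
  | single h s =>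
    rw [MonoidAlgebra.coeff_mul_single_apply, MonoidAlgebra.coeff_single_mul_apply,
      one_mul, mul_one, mul_comm]

/-- The Hattori–Stallings trace does not depend on the projective coordinate
system. -/
lemma ProjCoord.tr_eq {ι ι' : Type*} [Fintype ι] [Fintype ι'] {P : Type*}
    [AddCommMonoid P] [Module (MonoidAlgebra R G) P]
    (c : ProjCoord R G ι P) (c' : ProjCoord R G ι' P)
    (u : P →ₗ[MonoidAlgebra R G] P) : c.tr u = c'.tr u := by
  unfold ProjCoord.tr
  have key : ∀ i : ι, (c.f i (u (c.x i))).coeff 1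
      = ∑ j : ι', ((c'.f j (c.x i)) * (c.f i (u (c'.x j)))).coeff 1 := by
    intro i
    conv_lhs => rw [← c'.dual (c.x i)]
    rw [map_sum, map_sum, MonoidAlgebra.coeff_sum, Finset.sum_apply']
    refine Finset.sum_congr rfl fun j _ => ?_
    rw [LinearMap.map_smul, LinearMap.map_smul, smul_eq_mul]
  calc ∑ i, (c.f i (u (c.x i))).coeff 1
      = ∑ i, ∑ j : ι', ((c.f i (u (c'.x j))) * (c'.f j (c.x i))).coeff 1 := by
        refine Finset.sum_congr rfl fun i _ => ?_
        rw [key i]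
        exact Finset.sum_congr rfl fun j _ => coeff_one_mul_comm _ _
    _ = ∑ j : ι', ∑ i, ((c.f i (u (c'.x j))) * (c'.f j (c.x i))).coeff 1 :=
        Finset.sum_comm
    _ = ∑ j : ι', (c'.f j (u (c'.x j))).coeff 1 := by
        refine Finset.sum_congr rfl fun j _ => ?_
        rw [← Finset.sum_apply', ← MonoidAlgebra.coeff_sum]
        apply congrArg (fun z : MonoidAlgebra R G => z.coeff 1)
        have : ∑ i, c.f i (u (c'.x j)) * c'.f j (c.x i)
            = ∑ i, c'.f j ((c.f i (u (c'.x j))) • c.x i) := by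
          refine Finset.sum_congr rfl fun i _ => ?_
          rw [LinearMap.map_smul, smul_eq_mul]
        rw [this, ← map_sum, c.dual]

variable {I : Type*} [MulAction G I]

lemma cosetSet_finite (e : I) (he : (stabilizer G e : Set G).Finite) (i : I) :
    {g : G | g • e = i}.Finite := by
  by_cases h : ∃ g₀ : G, g₀ • e = i
  · obtain ⟨g₀, hg₀⟩ := h
    apply (he.image (fun h => g₀ * h)).subset
    intro g hg
    refine ⟨g₀⁻¹ * g, ?_, by group⟩
    simp only [SetLike.mem_coe, mem_stabilizer_iff]
    rw [mul_smul, hg, ← hg₀, inv_smul_smul]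
  · convert Set.finite_empty
    ext g
    simp only [Set.mem_setOf_eq, Set.mem_empty_iff_false, iff_false]
    exact fun hg => h ⟨g, hg⟩

variable (e : I) (he : (stabilizer G e : Set G).Finite)

/-- The (finite) set of group elements carrying the cell `e` to the cell `i`. -/
noncomputable def cosetF (i : I) : Finset G := (cosetSet_finite e he i).toFinset

lemma mem_cosetF {i : I} {g : G} : g ∈ cosetF e he i ↔ g • e = i := by
  simp [cosetF]

lemma cosetF_smul (h : G) (i : I) :
    cosetF e he (h • i) = (cosetF e he i).image (fun g => h * g) := by
  ext g
  simp only [mem_cosetF, Finset.mem_image]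
  constructor
  · intro hg
    refine ⟨h⁻¹ * g, ?_, by group⟩
    rw [mul_smul, hg, inv_smul_smul]
  · rintro ⟨k, hk, rfl⟩
    rw [mul_smul, hk]

lemma cosetF_card {i : I} (hi : i ∈ orbit G e) :
    (cosetF e he i).card = Nat.card (stabilizer G e) := by
  obtain ⟨g₀, hg₀⟩ := mem_orbit_iff.mp hi
  have h1 : cosetF e he i = (cosetF e he e).image (fun g => g₀ * g) := by
    rw [← hg₀, ← cosetF_smul]
  have h2 : cosetF e he e = he.toFinset := by
    ext g; simp [mem_cosetF, mem_stabilizer_iff]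
  rw [h1, Finset.card_image_of_injective _ (mul_right_injective g₀), h2,
    ← Nat.card_eq_card_finite_toFinset he]
  rfl

lemma cosetF_empty {i : I} (hi : i ∉ orbit G e) : cosetF e he i = ∅ := by
  ext g
  simp only [mem_cosetF, Finset.notMem_empty, iff_false]
  exact fun hg => hi (hg ▸ mem_orbit e g)

/-- The coefficient map underlying the dual-basis functional of the orbit of
`e`: it sends `i` to `|G_e|⁻¹ ∑_{g • e = i} g`. -/
noncomputable def Fcoef (i : I) : MonoidAlgebra ℚ G :=
  (Nat.card (stabilizer G e) : ℚ)⁻¹ •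
    ∑ g ∈ cosetF e he i, MonoidAlgebra.single g 1

lemma Fcoef_smul (h : G) (i : I) :
    Fcoef e he (h • i) = MonoidAlgebra.single h (1 : ℚ) * Fcoef e he i := by
  unfold Fcoef
  rw [mul_smul_comm]
  congr 1
  rw [cosetF_smul, Finset.sum_image (fun a _ b _ hab => mul_right_injective h hab),
    Finset.mul_sum]
  refine Finset.sum_congr rfl fun g _ => ?_
  rw [MonoidAlgebra.single_mul_single, one_mul]

lemma Fcoef_apply_one (i : I) :
    (Fcoef e he i).coeff 1
      = if i = e then (Nat.card (stabilizer G e) : ℚ)⁻¹ else 0 := by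
  classical
  unfold Fcoef
  rw [MonoidAlgebra.coeff_smul, Finsupp.smul_apply, MonoidAlgebra.coeff_sum, Finset.sum_apply']
  have : ∑ g ∈ cosetF e he i, (MonoidAlgebra.single g (1 : ℚ)).coeff 1
      = ∑ g ∈ cosetF e he i, if g = 1 then (1 : ℚ) else 0 := by
    refine Finset.sum_congr rfl fun g _ => ?_
    rw [MonoidAlgebra.coeff_single, Finsupp.single_apply]
  rw [this, Finset.sum_ite_eq' _ (1 : G) (fun _ => (1 : ℚ))]
  by_cases h1 : i = e
  · have hm : (1 : G) ∈ cosetF e he i :=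
      (mem_cosetF e he).mpr (by rw [h1]; exact one_smul G e)
    rw [if_pos hm, if_pos h1, smul_eq_mul, mul_one]
  · have hm : (1 : G) ∉ cosetF e he i := fun hmem =>
      h1 (((mem_cosetF e he).mp hmem).symm.trans (one_smul G e))
    rw [if_neg hm, if_neg h1, smul_zero]

lemma asAlgebraHom_Fcoef (i : I) :
    (Representation.ofMulAction ℚ G I).asAlgebraHom (Fcoef e he i)
        (MonoidAlgebra.single e (1 : ℚ))
      = if i ∈ orbit G e then MonoidAlgebra.single i (1 : ℚ) else 0 := by
  unfold Fcoef
  rw [map_smul, LinearMap.smul_apply, map_sum, LinearMap.sum_apply]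
  have hsum : ∑ g ∈ cosetF e he i,
      ((Representation.ofMulAction ℚ G I).asAlgebraHom (MonoidAlgebra.single g 1))
        (MonoidAlgebra.single e (1 : ℚ))
      = ∑ _g ∈ cosetF e he i, MonoidAlgebra.single i (1 : ℚ) := by
    refine Finset.sum_congr rfl fun g hg => ?_
    rw [Representation.asAlgebraHom_single_one, Representation.ofMulAction_single,
      (mem_cosetF e he).mp hg]
  rw [hsum, Finset.sum_const]
  by_cases hi : i ∈ orbit G e
  · haveI : Finite (stabilizer G e) := he.to_subtype
    have hpos : (0 : ℚ) < (Nat.card (stabilizer G e) : ℚ) := by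
      exact_mod_cast Nat.card_pos
    rw [if_pos hi, cosetF_card e he hi, ← Nat.cast_smul_eq_nsmul ℚ, smul_smul,
      inv_mul_cancel₀ hpos.ne', one_smul]
  · rw [if_neg hi, cosetF_empty e he hi, Finset.card_empty, zero_smul, smul_zero]

/-- The dual-basis functional of the orbit of `e`, as a `ℚ`-linear map. -/
noncomputable def phi : MonoidAlgebra ℚ I →ₗ[ℚ] MonoidAlgebra ℚ G :=
  Finsupp.lift (MonoidAlgebra ℚ G) ℚ I (Fcoef e he) ∘ₗ (MonoidAlgebra.coeffLinearEquiv ℚ).toLinearMap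

lemma phi_single (i : I) (a : ℚ) :
    phi e he (MonoidAlgebra.single i a) = a • Fcoef e he i := by
  show Finsupp.lift (MonoidAlgebra ℚ G) ℚ I (Fcoef e he) (Finsupp.single i a) = _
  simp

lemma phi_rho (g : G) (v : MonoidAlgebra ℚ I) :
    phi e he ((Representation.ofMulAction ℚ G I) g v)
      = MonoidAlgebra.single g 1 * phi e he v := by
  induction v using MonoidAlgebra.induction_linear with
  | zero => simp
  | add f₁ f₂ h₁ h₂ => rw [map_add, map_add, map_add, mul_add, h₁, h₂]
  | single i a =>
    rw [Representation.ofMulAction_single, phi_single, phi_single, Fcoef_smul,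
      mul_smul_comm]

/-- The dual-basis functional of the orbit of `e`, as a
`MonoidAlgebra ℚ G`-linear map on the cellular chain module. -/
noncomputable def fprime :
    cellModule G I →ₗ[MonoidAlgebra ℚ G] MonoidAlgebra ℚ G where
  toFun x := phi e he ((Representation.ofMulAction ℚ G I).asModuleEquiv x)
  map_add' x y := by rw [map_add, map_add]
  map_smul' r x := by
    simp only [RingHom.id_apply, smul_eq_mul]
    rw [Representation.asModuleEquiv_map_smul]
    generalize (Representation.ofMulAction ℚ G I).asModuleEquiv x = v
    induction r using MonoidAlgebra.induction_linear with
    | zero => simp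
    | add r₁ r₂ h₁ h₂ =>
      rw [map_add, LinearMap.add_apply, map_add, h₁, h₂, add_mul]
    | single g q =>
      rw [Representation.asAlgebraHom_single, LinearMap.smul_apply, map_smul,
        phi_rho, ← smul_mul_assoc, MonoidAlgebra.smul_single', mul_one]

variable [Fintype (Quotient (orbitRel G I))]

/-- The explicit projective coordinate system on the cellular chain module,
indexed by the orbits of cells. -/
noncomputable def cellCoord (hiso : ∀ e : I, (stabilizer G e : Set G).Finite) :
    ProjCoord ℚ G (Quotient (orbitRel G I)) (cellModule G I) where
  x o := (Representation.ofMulAction ℚ G I).asModuleEquiv.symm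
    (MonoidAlgebra.single o.out 1)
  f o := fprime o.out (hiso o.out)
  dual p := by
    apply (Representation.ofMulAction ℚ G I).asModuleEquiv.injective
    rw [map_sum]
    have step : ∀ o : Quotient (orbitRel G I),
        (Representation.ofMulAction ℚ G I).asModuleEquiv
          ((fprime o.out (hiso o.out)) p •
            (Representation.ofMulAction ℚ G I).asModuleEquiv.symm
              (MonoidAlgebra.single o.out 1))
        = (Representation.ofMulAction ℚ G I).asAlgebraHom
            (phi o.out (hiso o.out)
              ((Representation.ofMulAction ℚ G I).asModuleEquiv p))
            (MonoidAlgebra.single o.out 1) := by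
      intro o
      rw [Representation.asModuleEquiv_map_smul, LinearEquiv.apply_symm_apply]
      rfl
    rw [Finset.sum_congr rfl fun o _ => step o]
    generalize (Representation.ofMulAction ℚ G I).asModuleEquiv p = v
    induction v using MonoidAlgebra.induction_linear with
    | zero => simp
    | add f₁ f₂ h₁ h₂ =>
      have hsplit : ∀ o : Quotient (orbitRel G I),
          (Representation.ofMulAction ℚ G I).asAlgebraHom
            (phi o.out (hiso o.out) (f₁ + f₂)) (MonoidAlgebra.single o.out 1)
          = (Representation.ofMulAction ℚ G I).asAlgebraHom
              (phi o.out (hiso o.out) f₁) (MonoidAlgebra.single o.out 1)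
            + (Representation.ofMulAction ℚ G I).asAlgebraHom
              (phi o.out (hiso o.out) f₂) (MonoidAlgebra.single o.out 1) := by
        intro o
        rw [map_add, map_add, LinearMap.add_apply]
      rw [Finset.sum_congr rfl fun o _ => hsplit o, Finset.sum_add_distrib, h₁, h₂]
    | single i a =>
      have horb : ∀ o : Quotient (orbitRel G I),
          (i ∈ orbit G o.out) ↔ o = Quotient.mk (orbitRel G I) i := by
        intro o
        rw [← orbitRel_apply, ← Quotient.eq (r := orbitRel G I), Quotient.out_eq,
          eq_comm]
      have hterm : ∀ o : Quotient (orbitRel G I),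
          (Representation.ofMulAction ℚ G I).asAlgebraHom
            (phi o.out (hiso o.out) (MonoidAlgebra.single i a))
            (MonoidAlgebra.single o.out 1)
          = if o = Quotient.mk (orbitRel G I) i
              then MonoidAlgebra.single i a else 0 := by
        intro o
        rw [phi_single, map_smul, LinearMap.smul_apply, asAlgebraHom_Fcoef,
          horb o]
        by_cases h : o = Quotient.mk (orbitRel G I) i
        · rw [if_pos h, if_pos h, MonoidAlgebra.smul_single', mul_one]
        · rw [if_neg h, if_neg h, smul_zero]
      rw [Finset.sum_congr rfl fun o _ => hterm o,
        Finset.sum_ite_eq' _ (Quotient.mk (orbitRel G I) i) _,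
        if_pos (Finset.mem_univ _)]

lemma cellCoord_tr (hiso : ∀ e : I, (stabilizer G e : Set G).Finite)
    (u : cellModule G I →ₗ[MonoidAlgebra ℚ G] cellModule G I) :
    (cellCoord hiso).tr u
      = ∑ o : Quotient (orbitRel G I),
          (Nat.card (stabilizer G o.out) : ℚ)⁻¹ * incidence G I u o.out := by
  unfold ProjCoord.tr
  refine Finset.sum_congr rfl fun o _ => ?_
  set e := o.out with hedef
  set he := hiso e
  show (phi e he ((Representation.ofMulAction ℚ G I).asModuleEquiv
      (u ((Representation.ofMulAction ℚ G I).asModuleEquiv.symm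
        (MonoidAlgebra.single e 1))))).coeff 1 = _
  have hw : (Representation.ofMulAction ℚ G I).asModuleEquiv
      (u ((Representation.ofMulAction ℚ G I).asModuleEquiv.symm
        (MonoidAlgebra.single e 1)))
      = MonoidAlgebra.ofCoeff (cellModule.forget G I u (Finsupp.single e 1)) := rfl
  rw [hw]
  set w := cellModule.forget G I u (Finsupp.single e 1) with hwdef
  have hphi : phi e he (MonoidAlgebra.ofCoeff w) = ∑ i ∈ w.support, w i • Fcoef e he i := by
    show Finsupp.lift (MonoidAlgebra ℚ G) ℚ I (Fcoef e he) w = _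
    simp [Finsupp.sum]
  rw [hphi, MonoidAlgebra.coeff_sum, Finset.sum_apply']
  have hterm : ∀ i a, (a • Fcoef e he i).coeff 1
      = if i = e then a * (Nat.card (stabilizer G e) : ℚ)⁻¹ else 0 := by
    intro i a
    rw [MonoidAlgebra.coeff_smul, Finsupp.smul_apply, smul_eq_mul, Fcoef_apply_one, mul_ite, mul_zero]
  rw [Finset.sum_congr rfl fun i _ => hterm i (w i),
    Finset.sum_ite_eq' w.support e
      (fun i => w i * (Nat.card (stabilizer G e) : ℚ)⁻¹)]
  have hinc : incidence G I u e = w e := rfl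
  rw [hinc]
  by_cases hmem : e ∈ w.support
  · rw [if_pos hmem, mul_comm]
  · rw [if_neg hmem, Finsupp.notMem_support_iff.mp hmem, mul_zero]


end OrbLef

/-- for a cellular `G`-self-map `(f,f₀)` of a finite proper
relative `G`-CW-pair `(X,A)` (cell `G`-sets `I p` with finite isotropy groups,
finitely many orbits, empty above the dimension `d`), the orbifold Lefschetz
number is computed from the incidence numbers:
`L^{ℚG}(f,f₀) = ∑_{p≥0} (−1)^p · ∑_{Ge ∈ G\I_p(X,A)} |G_e|⁻¹ · inc(f,e)`. -/
theorem orbifold_lefschetz_eq_incidence_sum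
    (G : Type*) [Group G]
    (I : ℕ → Type*) [∀ p, MulAction G (I p)]
    (hiso : ∀ (p : ℕ) (e : I p), (MulAction.stabilizer G e : Set G).Finite)
    [∀ p, Fintype (Quotient (MulAction.orbitRel G (I p)))]
    (d : ℕ) (hd : ∀ p, d ≤ p → IsEmpty (I p))
    (u : ∀ p, cellModule G (I p) →ₗ[MonoidAlgebra ℚ G] cellModule G (I p))
    {ι : ℕ → Type} [∀ p, Fintype (ι p)]
    (c : ∀ p, ProjCoord ℚ G (ι p) (cellModule G (I p))) :
    (∑ p ∈ Finset.range d, (-1 : ℚ) ^ p * (c p).tr (u p)) =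
      ∑ p ∈ Finset.range d, (-1 : ℚ) ^ p *
        ∑ o : Quotient (MulAction.orbitRel G (I p)),
          (Nat.card (MulAction.stabilizer G o.out) : ℚ)⁻¹ *
            incidence G (I p) (u p) o.out := by
  refine Finset.sum_congr rfl fun p _ => ?_
  congr 1
  rw [OrbLef.ProjCoord.tr_eq (c p) (OrbLef.cellCoord (hiso p)) (u p),
    OrbLef.cellCoord_tr]
end
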